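/- If a vector x in R^n majorizes a vector y in R^n, then for every continuous strictly convex function g: R → R, the sum of g(x_i) over i is at least the sum of g(y_i); moreover if x strictly majorizes y (x majorizes y but y does not majorize x), the inequality is strict. -/

import Mathlib

open Finset

/-- `x` majorizes `y`: for each `k`, the sum of the `k` largest coordinates of `x`
is at least that of `y`, and the total sums agree.  (Stated via the equivalent
subset formulation.) -/
def maj {n : ℕ} (x y : Fin n → ℝ) : Prop :=
  (∀ B : Finset (Fin n), ∃ A : Finset (Fin n),
      A.card = B.card ∧ ∑ i ∈ B, y i ≤ ∑ i ∈ A, x i) ∧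
  ∑ i, x i = ∑ i, y i

/-- strict majorization -/
def smaj {n : ℕ} (x y : Fin n → ℝ) : Prop := maj x y ∧ ¬ maj y x

/-! ### Auxiliary lemmas -/

lemma fin_strictMono_nat_le {k : ℕ} (v : Fin k → ℕ) (hv : StrictMono v) (j : Fin k) :
    (j : ℕ) ≤ v j := by
  obtain ⟨m, hm⟩ := j
  induction m with
  | zero => exact Nat.zero_le _
  | succ i ih =>
    have h1 : i < k := Nat.lt_of_succ_lt hm
    have h2 := hv (show (⟨i, h1⟩ : Fin k) < ⟨i+1, hm⟩ by simp [Fin.lt_def])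
    have h3 := ih h1
    simp only [Fin.val_mk] at h3 ⊢
    omega

lemma emb_val_bound {k n : ℕ} (e : Fin k ↪o Fin n) (j : Fin k) :
    (e j : ℕ) ≤ n - k + j := by
  have hkn : k ≤ n := by
    simpa using Fintype.card_le_of_embedding e.toEmbedding
  set w : Fin k → ℕ := fun i => n - 1 - (e i.rev : ℕ) with hw
  have hwm : StrictMono w := by
    intro i i' hii
    have h1 : e i'.rev < e i.rev := e.strictMono (by simpa [Fin.rev_lt_rev] using hii)
    have h2 : (e i.rev : ℕ) < n := (e i.rev).isLt
    simp only [hw]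
    have := Fin.lt_def.mp h1
    omega
  have h4 := fin_strictMono_nat_le w hwm j.rev
  have h5 : (e j.rev.rev : ℕ) < n := (e _).isLt
  rw [hw] at h4
  simp only [Fin.rev_rev] at h4 h5
  have h6 : (j.rev : ℕ) = k - 1 - j := Fin.val_rev j ▸ by omega
  have := j.isLt
  omega

lemma sum_le_top {n k : ℕ} (hkn : k ≤ n) {a : Fin n → ℝ} (ha : Monotone a)
    (B : Finset (Fin n)) (hk : B.card = k) :
    ∑ i ∈ B, a i ≤ ∑ j : Fin k, a ⟨n - k + (j : ℕ), by have := j.isLt; omega⟩ := by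
  have hB : B = Finset.univ.map (B.orderEmbOfFin hk).toEmbedding := by
    ext i
    simp only [Finset.mem_map, Finset.mem_univ, true_and]
    constructor
    · intro hi
      have : i ∈ Set.range (B.orderEmbOfFin hk) := by
        rw [Finset.range_orderEmbOfFin]; exact hi
      obtain ⟨j, hj⟩ := this
      exact ⟨j, hj⟩
    · rintro ⟨j, rfl⟩
      exact Finset.orderEmbOfFin_mem B hk j
  conv_lhs => rw [hB]
  rw [Finset.sum_map]
  apply Finset.sum_le_sum
  intro j _
  apply ha
  rw [Fin.le_def]
  simpa using emb_val_bound (B.orderEmbOfFin hk) j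

lemma abel_nonneg (n : ℕ) (c u : ℕ → ℝ)
    (hc : ∀ i, i + 1 < n → c i ≤ c (i + 1))
    (hP : ∀ k, k ≤ n → ∑ i ∈ range k, u i ≤ 0)
    (htot : ∑ i ∈ range n, u i = 0) :
    0 ≤ ∑ i ∈ range n, c i * u i := by
  have h := Finset.sum_range_by_parts c u n
  simp only [smul_eq_mul] at h
  rw [h, htot, mul_zero, zero_sub, neg_nonneg]
  apply Finset.sum_nonpos
  intro i hi
  rw [Finset.mem_range] at hi
  have h1 : c i ≤ c (i + 1) := hc i (by omega)
  have h2 : ∑ j ∈ range (i + 1), u j ≤ 0 := hP (i + 1) (by omega)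
  exact mul_nonpos_of_nonneg_of_nonpos (by linarith) h2

/-! ### Slopes and the left derivative of a convex function -/

noncomputable def sl (g : ℝ → ℝ) (s t : ℝ) : ℝ := (g t - g s) / (t - s)

noncomputable def ld (g : ℝ → ℝ) (t : ℝ) : ℝ := sSup ((fun s => sl g s t) '' Set.Iio t)

lemma sl_mono_adj {g : ℝ → ℝ} (hg' : StrictConvexOn ℝ Set.univ g) {s t u : ℝ}
    (hst : s < t) (htu : t < u) : sl g s t ≤ sl g t u :=
  hg'.convexOn.slope_mono_adjacent (Set.mem_univ s) (Set.mem_univ u) hst htu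

lemma ld_bdd {g : ℝ → ℝ} (hg' : StrictConvexOn ℝ Set.univ g) (t : ℝ) :
    BddAbove ((fun s => sl g s t) '' Set.Iio t) := by
  refine ⟨sl g t (t + 1), ?_⟩
  rintro r ⟨s, hs, rfl⟩
  exact sl_mono_adj hg' hs (by linarith)

lemma le_ld {g : ℝ → ℝ} (hg' : StrictConvexOn ℝ Set.univ g) {s t : ℝ} (hst : s < t) :
    sl g s t ≤ ld g t :=
  le_csSup (ld_bdd hg' t) ⟨s, hst, rfl⟩

lemma ld_le {g : ℝ → ℝ} (hg' : StrictConvexOn ℝ Set.univ g) {t u : ℝ} (htu : t < u) :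
    ld g t ≤ sl g t u := by
  refine csSup_le ⟨sl g (t - 1) t, ⟨t - 1, by simp, rfl⟩⟩ ?_
  rintro r ⟨s, hs, rfl⟩
  exact sl_mono_adj hg' hs htu

lemma ld_mono {g : ℝ → ℝ} (hg' : StrictConvexOn ℝ Set.univ g) : Monotone (ld g) := by
  intro t u htu
  rcases eq_or_lt_of_le htu with rfl | h
  · exact le_refl _
  · exact (ld_le hg' h).trans (le_ld hg' h)

lemma subgrad_lt {g : ℝ → ℝ} (hg' : StrictConvexOn ℝ Set.univ g) {p q : ℝ} (hpq : p ≠ q) :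
    g p + ld g p * (q - p) < g q := by
  rcases lt_or_gt_of_ne hpq with h | h
  · set m := (p + q) / 2 with hm
    have h1 : p < m := by rw [hm]; linarith
    have h2 : m < q := by rw [hm]; linarith
    have h3 : ld g p ≤ sl g p m := ld_le hg' h1
    have h4 : sl g p m < sl g p q := by
      have := hg'.secant_strict_mono (Set.mem_univ p) (Set.mem_univ m) (Set.mem_univ q)
        (by linarith) (by linarith) h2
      simpa [sl] using this
    have h5 : sl g p q * (q - p) = g q - g p := by
      rw [sl, div_mul_cancel₀ _ (by linarith : q - p ≠ 0)]
    nlinarith [h3, h4, h5]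
  · set m := (p + q) / 2 with hm
    have h1 : q < m := by rw [hm]; linarith
    have h2 : m < p := by rw [hm]; linarith
    have h3 : sl g m p ≤ ld g p := le_ld hg' h2
    have h4 : sl g q p < sl g m p := by
      have := hg'.secant_strict_mono (Set.mem_univ p) (Set.mem_univ q) (Set.mem_univ m)
        (by linarith) (by linarith) h1
      have e1 : sl g q p = (g q - g p) / (q - p) := by
        rw [sl, ← neg_div_neg_eq]; ring_nf
      have e2 : sl g m p = (g m - g p) / (m - p) := by
        rw [sl, ← neg_div_neg_eq]; ring_nf
      rw [e1, e2]; exact this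
    have h5 : sl g q p * (q - p) = g q - g p := by
      have hne : p - q ≠ 0 := by linarith
      rw [sl]
      field_simp
      ring
    nlinarith [h3, h4, h5]

lemma subgrad_le {g : ℝ → ℝ} (hg' : StrictConvexOn ℝ Set.univ g) (p q : ℝ) :
    g p + ld g p * (q - p) ≤ g q := by
  rcases eq_or_ne p q with rfl | h
  · simp
  · exact (subgrad_lt hg' h).le

/-! ### Core Karamata inequality for sorted sequences -/

lemma karamata_core (n : ℕ) (a b : ℕ → ℝ) (g : ℝ → ℝ)
    (hg' : StrictConvexOn ℝ Set.univ g)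
    (hb : ∀ i j, i ≤ j → j < n → b i ≤ b j)
    (hpre : ∀ k, k ≤ n → ∑ i ∈ range k, a i ≤ ∑ i ∈ range k, b i)
    (htot : ∑ i ∈ range n, a i = ∑ i ∈ range n, b i) :
    (∑ i ∈ range n, g (b i) ≤ ∑ i ∈ range n, g (a i)) ∧
    ((∃ i, i < n ∧ a i ≠ b i) → ∑ i ∈ range n, g (b i) < ∑ i ∈ range n, g (a i)) := by
  set c : ℕ → ℝ := fun i => ld g (b i) with hc
  have habel : 0 ≤ ∑ i ∈ range n, c i * (a i - b i) := by
    apply abel_nonneg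
    · intro i hi
      exact ld_mono hg' (hb i (i + 1) (by omega) hi)
    · intro k hk
      rw [Finset.sum_sub_distrib]
      linarith [hpre k hk]
    · rw [Finset.sum_sub_distrib, htot, sub_self]
  have hpt : ∀ i ∈ range n, g (b i) + c i * (a i - b i) ≤ g (a i) :=
    fun i _ => subgrad_le hg' (b i) (a i)
  have hsplit : ∑ i ∈ range n, (g (b i) + c i * (a i - b i)) =
      (∑ i ∈ range n, g (b i)) + ∑ i ∈ range n, c i * (a i - b i) :=
    Finset.sum_add_distrib
  constructor
  · have := Finset.sum_le_sum hpt
    rw [hsplit] at this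
    linarith
  · rintro ⟨i₀, hi₀, hne⟩
    have hlt : ∑ i ∈ range n, (g (b i) + c i * (a i - b i)) < ∑ i ∈ range n, g (a i) :=
      Finset.sum_lt_sum hpt ⟨i₀, Finset.mem_range.mpr hi₀, subgrad_lt hg' (Ne.symm hne)⟩
    rw [hsplit] at hlt
    linarith

/-! ### Sorting machinery -/

/-- extend a `Fin n`-tuple by zero -/
noncomputable def ext0 {n : ℕ} (a : Fin n → ℝ) : ℕ → ℝ :=
  fun i => if h : i < n then a ⟨i, h⟩ else 0

lemma ext0_lt {n : ℕ} (a : Fin n → ℝ) {i : ℕ} (h : i < n) : ext0 a i = a ⟨i, h⟩ := dif_pos h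

lemma sum_range_ext0 {n : ℕ} (a : Fin n → ℝ) : ∑ i ∈ range n, ext0 a i = ∑ i, a i := by
  rw [← Fin.sum_univ_eq_sum_range (fun i => ext0 a i) n]
  exact Finset.sum_congr rfl fun i _ => by rw [ext0_lt a i.isLt]

lemma sum_range_ext0_comp {n : ℕ} (g : ℝ → ℝ) (a : Fin n → ℝ) :
    ∑ i ∈ range n, g (ext0 a i) = ∑ i, g (a i) := by
  rw [show (∑ i ∈ range n, g (ext0 a i)) = ∑ i ∈ range n, ext0 (fun j => g (a j)) i from
    Finset.sum_congr rfl fun i hi => by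
      rw [ext0_lt a (Finset.mem_range.mp hi), ext0_lt _ (Finset.mem_range.mp hi)]]
  exact sum_range_ext0 _

/-- the set of the `n - k` largest indices of `Fin n` -/
def topSet (n k : ℕ) : Finset (Fin n) :=
  Finset.image (fun j : Fin (n - k) => (⟨k + (j : ℕ), by have := j.isLt; omega⟩ : Fin n))
    Finset.univ

lemma topSet_inj (n k : ℕ) : Function.Injective
    (fun j : Fin (n - k) => (⟨k + (j : ℕ), by have := j.isLt; omega⟩ : Fin n)) := by
  intro j j' h
  have := congrArg Fin.val h
  simp only [Fin.val_mk] at this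
  exact Fin.ext (by omega)

lemma topSet_card (n k : ℕ) : (topSet n k).card = n - k := by
  rw [topSet, Finset.card_image_of_injective _ (topSet_inj n k), Finset.card_univ,
    Fintype.card_fin]

lemma topSet_sum {n : ℕ} (k : ℕ) (z : Fin n → ℝ) :
    ∑ i ∈ topSet n k, z i = ∑ j : Fin (n - k), z ⟨k + (j : ℕ), by have := j.isLt; omega⟩ := by
  rw [topSet, Finset.sum_image (fun u _ v _ h => topSet_inj n k h)]

lemma sum_image_perm {n : ℕ} (ρ : Equiv.Perm (Fin n)) (z : Fin n → ℝ) (S : Finset (Fin n)) :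
    ∑ i ∈ S.image ρ, z i = ∑ i ∈ S, z (ρ i) :=
  Finset.sum_image (fun u _ v _ h => ρ.injective h)

/-- splitting the zero-extended sum -/
lemma sum_ext0_split {n k : ℕ} (hk : k ≤ n) (a : Fin n → ℝ) :
    ∑ i ∈ range n, ext0 a i = (∑ i ∈ range k, ext0 a i) + ∑ i ∈ topSet n k, a i := by
  rw [topSet_sum]
  have h1 : ∑ i ∈ range n, ext0 a i =
      (∑ i ∈ range k, ext0 a i) + ∑ i ∈ Ico k n, ext0 a i := by
    rw [Finset.range_eq_Ico, ← Finset.sum_Ico_consecutive _ (Nat.zero_le k) hk, Finset.range_eq_Ico]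
  rw [h1, Finset.sum_Ico_eq_sum_range]
  congr 1
  rw [← Fin.sum_univ_eq_sum_range (fun i => ext0 a (k + i)) (n - k)]
  exact Finset.sum_congr rfl fun j _ => by
    rw [ext0_lt a (show k + (j : ℕ) < n by have := j.isLt; omega)]

/-- sum over any `n - k`-element subset is at most the top sum of the sorted tuple -/
lemma sum_le_topSet {n k : ℕ} (hkn : k ≤ n) (x : Fin n → ℝ) (A : Finset (Fin n))
    (hA : A.card = n - k) :
    ∑ i ∈ A, x i ≤ ∑ i ∈ topSet n k, (x ∘ Tuple.sort x) i := by
  have h1 : ∑ i ∈ A.image (Tuple.sort x).symm, (x ∘ Tuple.sort x) i = ∑ i ∈ A, x i := by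
    rw [sum_image_perm]
    exact Finset.sum_congr rfl fun i _ => by simp
  rw [← h1, topSet_sum]
  have h2 := sum_le_top (Nat.sub_le n k) (Tuple.monotone_sort x)
      (A.image (Tuple.sort x).symm)
      (by rw [Finset.card_image_of_injective _ (Equiv.injective _), hA])
  refine h2.trans_eq (Finset.sum_congr rfl fun j _ => ?_)
  exact congrArg _ (Fin.ext (by simp only [Fin.val_mk]; omega))

/-- the top sum of the sorted tuple equals the sum over an actual subset -/
lemma topSet_sum_image {n k : ℕ} (y : Fin n → ℝ) :
    ∑ i ∈ (topSet n k).image (Tuple.sort y), y i = ∑ i ∈ topSet n k, (y ∘ Tuple.sort y) i :=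
  sum_image_perm _ _ _

lemma maj_suffix {n k : ℕ} (hk : k ≤ n) {x y : Fin n → ℝ} (hm : maj x y) :
    ∑ i ∈ topSet n k, (y ∘ Tuple.sort y) i ≤ ∑ i ∈ topSet n k, (x ∘ Tuple.sort x) i := by
  obtain ⟨A, hAcard, hAle⟩ := hm.1 ((topSet n k).image (Tuple.sort y))
  have hYcard : ((topSet n k).image (Tuple.sort y)).card = n - k := by
    rw [Finset.card_image_of_injective _ (Equiv.injective _), topSet_card]
  calc ∑ i ∈ topSet n k, (y ∘ Tuple.sort y) i
      = ∑ i ∈ (topSet n k).image (Tuple.sort y), y i := (topSet_sum_image y).symm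
    _ ≤ ∑ i ∈ A, x i := hAle
    _ ≤ ∑ i ∈ topSet n k, (x ∘ Tuple.sort x) i :=
        sum_le_topSet hk x A (hAcard.trans hYcard)

lemma maj_of_sort_eq {n : ℕ} {x y : Fin n → ℝ}
    (h : x ∘ Tuple.sort x = y ∘ Tuple.sort y) (htot : ∑ i, y i = ∑ i, x i) : maj y x := by
  refine ⟨fun B => ?_, htot⟩
  have hBn : B.card ≤ n := by
    simpa using B.card_le_univ
  refine ⟨(topSet n (n - B.card)).image (Tuple.sort y), ?_, ?_⟩
  · rw [Finset.card_image_of_injective _ (Equiv.injective _), topSet_card]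
    omega
  · calc ∑ i ∈ B, x i
        ≤ ∑ i ∈ topSet n (n - B.card), (x ∘ Tuple.sort x) i :=
          sum_le_topSet (by omega) x B (by omega)
      _ = ∑ i ∈ topSet n (n - B.card), (y ∘ Tuple.sort y) i := by rw [h]
      _ = ∑ i ∈ (topSet n (n - B.card)).image (Tuple.sort y), y i := (topSet_sum_image y).symm

/-! ### Main theorem -/

theorem stmt0 {n : ℕ} (x y : Fin n → ℝ) (g : ℝ → ℝ)
    (hg : Continuous g) (hg' : StrictConvexOn ℝ Set.univ g) :
    (maj x y → ∑ i, g (y i) ≤ ∑ i, g (x i)) ∧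
    (smaj x y → ∑ i, g (y i) < ∑ i, g (x i)) := by
  have key : maj x y →
      (∑ i, g (y i) ≤ ∑ i, g (x i)) ∧
      ((x ∘ Tuple.sort x ≠ y ∘ Tuple.sort y) → ∑ i, g (y i) < ∑ i, g (x i)) := by
    intro hm
    have hb' : ∀ i j, i ≤ j → j < n →
        ext0 (y ∘ Tuple.sort y) i ≤ ext0 (y ∘ Tuple.sort y) j := by
      intro i j hij hj
      rw [ext0_lt _ (lt_of_le_of_lt hij hj), ext0_lt _ hj]
      exact Tuple.monotone_sort y (Fin.mk_le_mk.mpr hij)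
    have e1 : ∑ i, (x ∘ Tuple.sort x) i = ∑ i, x i := Equiv.sum_comp (Tuple.sort x) x
    have e2 : ∑ i, (y ∘ Tuple.sort y) i = ∑ i, y i := Equiv.sum_comp (Tuple.sort y) y
    have htots : ∑ i ∈ range n, ext0 (x ∘ Tuple.sort x) i
        = ∑ i ∈ range n, ext0 (y ∘ Tuple.sort y) i := by
      rw [sum_range_ext0, sum_range_ext0, e1, e2]
      exact hm.2
    have hpre : ∀ k, k ≤ n → ∑ i ∈ range k, ext0 (x ∘ Tuple.sort x) i
        ≤ ∑ i ∈ range k, ext0 (y ∘ Tuple.sort y) i := by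
      intro k hk
      have hs := maj_suffix hk hm
      have h1 := sum_ext0_split hk (x ∘ Tuple.sort x)
      have h2 := sum_ext0_split hk (y ∘ Tuple.sort y)
      linarith
    have hcore := karamata_core n (ext0 (x ∘ Tuple.sort x)) (ext0 (y ∘ Tuple.sort y)) g hg'
      hb' hpre htots
    have hgx : ∑ i ∈ range n, g (ext0 (x ∘ Tuple.sort x) i) = ∑ i, g (x i) := by
      rw [sum_range_ext0_comp]
      exact Equiv.sum_comp (Tuple.sort x) (fun i => g (x i))
    have hgy : ∑ i ∈ range n, g (ext0 (y ∘ Tuple.sort y) i) = ∑ i, g (y i) := by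
      rw [sum_range_ext0_comp]
      exact Equiv.sum_comp (Tuple.sort y) (fun i => g (y i))
    constructor
    · rw [← hgx, ← hgy]
      exact hcore.1
    · intro hne
      rw [← hgx, ← hgy]
      apply hcore.2
      obtain ⟨i, hi⟩ := Function.ne_iff.mp hne
      exact ⟨(i : ℕ), i.isLt, by rw [ext0_lt _ i.isLt, ext0_lt _ i.isLt]; simpa using hi⟩
  refine ⟨fun hm => (key hm).1, fun hs => ?_⟩
  apply (key hs.1).2
  intro heq
  exact hs.2 (maj_of_sort_eq heq hs.1.2.symm)
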